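/- In any partially collaborative Nash equilibrium, i.e., a Nash equilibrium s* = (x*, y*, g*) with C(g*) = {i, j}, t_i > t_j, g*_{ji} = 1 and g*_{ij} = 0, the equilibrium contributions of the large contributors are (x*_i, y*_i) = (x̂_i, ŷ_i) and (x*_j, y*_j) = (0, ŷ_j − ŷ_i); in particular ŷ_j ≥ ŷ_i. -/

import Mathlib

open Filter

noncomputable section

/-- `(x, y)` is an isolation demand for taste `t`: a maximizer of
`t·f(x) + (1−t)·f(y) − c·(x+y)` over nonnegative contributions. -/
def IsIsolationDemand (f : ℝ → ℝ) (c t x y : ℝ) : Prop :=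
  0 ≤ x ∧ 0 ≤ y ∧
  ∀ x' y' : ℝ, 0 ≤ x' → 0 ≤ y' →
    t * f x' + (1 - t) * f y' - c * (x' + y') ≤ t * f x + (1 - t) * f y - c * (x + y)

/-- Maintained assumptions on the benefit function `f`: twice continuously
differentiable, strictly increasing, strictly concave on `[0,∞)`, with
`lim_{z→0⁺} f′(z) > c` (possibly `+∞`, hence an `EReal` limit) and
`lim_{z→∞} f′(z) = m < c`. -/
def BenefitAssumptions (f : ℝ → ℝ) (c : ℝ) : Prop :=
  ContDiffOn ℝ 2 f (Set.Ici 0) ∧ StrictMonoOn f (Set.Ici 0) ∧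
  StrictConcaveOn ℝ (Set.Ici 0) f ∧
  (∃ L : EReal, Tendsto (fun z => Real.toEReal (deriv f z)) (nhdsWithin 0 (Set.Ioi 0)) (nhds L) ∧
    (c : EReal) < L) ∧
  (∃ m : ℝ, Tendsto (deriv f) atTop (nhds m) ∧ m < c)

/-- Spillovers of a good with contribution profile `x` received by `i`
through the links she sponsors in `g`. -/
def spill {n : ℕ} (x : Fin n → ℝ) (g : Fin n → Fin n → Bool) (i : Fin n) : ℝ :=
  ∑ j, if g i j then x j else 0

/-- Number of links sponsored by `i` (as a real number). -/
def nlinks {n : ℕ} (g : Fin n → Fin n → Bool) (i : Fin n) : ℝ :=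
  ∑ j, if g i j then (1 : ℝ) else 0

/-- Utility of player `i` under the strategy profile `(x, y, g)`. -/
def payoff {n : ℕ} (t : Fin n → ℝ) (f : ℝ → ℝ) (c k : ℝ)
    (x y : Fin n → ℝ) (g : Fin n → Fin n → Bool) (i : Fin n) : ℝ :=
  t i * f (x i + spill x g i) + (1 - t i) * f (y i + spill y g i)
    - c * (x i + y i) - nlinks g i * k

/-- Replace player `i`'s row of links by `gi`. -/
def updLinks {n : ℕ} (g : Fin n → Fin n → Bool) (i : Fin n) (gi : Fin n → Bool) :
    Fin n → Fin n → Bool :=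
  fun a b => if a = i then gi b else g a b

/-- Nash equilibrium: contributions are nonnegative, nobody links to herself,
and no player can strictly gain by simultaneously changing her own
contributions and links. -/
def NashEq {n : ℕ} (t : Fin n → ℝ) (f : ℝ → ℝ) (c k : ℝ)
    (x y : Fin n → ℝ) (g : Fin n → Fin n → Bool) : Prop :=
  (∀ i, 0 ≤ x i) ∧ (∀ i, 0 ≤ y i) ∧ (∀ i, g i i = false) ∧
  ∀ (i : Fin n) (xi yi : ℝ) (gi : Fin n → Bool), 0 ≤ xi → 0 ≤ yi → gi i = false →
    payoff t f c k (Function.update x i xi) (Function.update y i yi) (updLinks g i gi) i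
      ≤ payoff t f c k x y g i

/-- Assumptions on taste parameters: pairwise distinct, in `[0,1]`, and the
extreme types `0` and `1` are realized. -/
def TypeAssumptions {n : ℕ} (t : Fin n → ℝ) : Prop :=
  Function.Injective t ∧ (∀ i, t i ∈ Set.Icc (0:ℝ) 1) ∧ (∃ i, t i = 0) ∧ (∃ i, t i = 1)

/-- `i` is a large contributor in `g`: she receives at least one link. -/
def isContributor {n : ℕ} (g : Fin n → Fin n → Bool) (i : Fin n) : Prop :=
  ∃ j, g j i = true

/-- `i` is isolated in `g`: she neither sponsors nor receives links. -/
def isIsolated {n : ℕ} (g : Fin n → Fin n → Bool) (i : Fin n) : Prop :=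
  (∀ j, g i j = false) ∧ (∀ j, g j i = false)

/-- Uniqueness of the maximizer of `w ↦ t·f(w+a) − c·w` over `[0,∞)`. -/
private lemma uniq1 {f : ℝ → ℝ} (hf : StrictConcaveOn ℝ (Set.Ici 0) f)
    {t c a : ℝ} (ht : 0 ≤ t) (hc : 0 < c) (ha : 0 ≤ a)
    {x1 x2 : ℝ} (hx1 : 0 ≤ x1) (hx2 : 0 ≤ x2)
    (h1 : ∀ w, 0 ≤ w → t * f (w + a) - c * w ≤ t * f (x1 + a) - c * x1)
    (h2 : ∀ w, 0 ≤ w → t * f (w + a) - c * w ≤ t * f (x2 + a) - c * x2) :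
    x1 = x2 := by
  rcases eq_or_lt_of_le ht with ht0 | ht0
  · have e1 := h1 0 le_rfl
    have e2 := h2 0 le_rfl
    rw [← ht0] at e1 e2
    have : x1 ≤ 0 := by nlinarith
    have : x2 ≤ 0 := by nlinarith
    linarith [le_antisymm ‹x1 ≤ 0› hx1, le_antisymm ‹x2 ≤ 0› hx2]
  · by_contra hne
    have hm : (0:ℝ) ≤ (x1 + x2) / 2 := by linarith
    have hne' : x1 + a ≠ x2 + a := fun h => hne (by linarith [add_right_cancel h])
    have hsc := hf.2 (Set.mem_Ici.2 (by linarith : (0:ℝ) ≤ x1 + a))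
      (Set.mem_Ici.2 (by linarith : (0:ℝ) ≤ x2 + a)) hne'
      (by norm_num : (0:ℝ) < 1/2) (by norm_num : (0:ℝ) < 1/2) (by norm_num)
    simp only [smul_eq_mul] at hsc
    have hmid : (1/2 : ℝ) * (x1 + a) + (1/2 : ℝ) * (x2 + a) = (x1 + x2) / 2 + a := by ring
    rw [hmid] at hsc
    have e1 := h1 x2 hx2
    have e2 := h2 x1 hx1
    have e3 := h1 ((x1 + x2) / 2) hm
    nlinarith [mul_lt_mul_of_pos_left hsc ht0]

/-- A concave function `w ↦ t·f(w) − c·w` maximized at `z` is decreasing on `[z,∞)`. -/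
private lemma concave_shift {f : ℝ → ℝ} (hf : ConcaveOn ℝ (Set.Ici 0) f)
    {t c : ℝ} (ht : 0 ≤ t) {z a X : ℝ} (hz : 0 ≤ z)
    (hmax : ∀ w, 0 ≤ w → t * f w - c * w ≤ t * f z - c * z)
    (hza : z ≤ a) (haX : a ≤ X) : t * f X - c * X ≤ t * f a - c * a := by
  rcases eq_or_lt_of_le haX with rfl | haX
  · exact le_rfl
  rcases eq_or_lt_of_le hza with rfl | hza
  · exact hmax X (by linarith)
  · set l : ℝ := (X - a) / (X - z) with hl
    have hXz : 0 < X - z := by linarith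
    have hl0 : 0 < l := div_pos (by linarith) hXz
    have hl1 : l < 1 := by
      rw [hl, div_lt_one hXz]; linarith
    have hcomb : l * z + (1 - l) * X = a := by
      rw [hl, div_mul_eq_mul_div, one_sub_div hXz.ne', div_mul_eq_mul_div, ← add_div,
        div_eq_iff hXz.ne']; ring
    have hcc := hf.2 (Set.mem_Ici.2 hz) (Set.mem_Ici.2 (by linarith : (0:ℝ) ≤ X))
      (le_of_lt hl0) (by linarith : (0:ℝ) ≤ 1 - l) (by ring)
    simp only [smul_eq_mul] at hcc
    rw [hcomb] at hcc
    have huz := hmax a (by linarith)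
    have htf := mul_le_mul_of_nonneg_left hcc ht
    have hcc2 : c * (l * z) + c * ((1 - l) * X) = c * a := by rw [← hcomb]; ring
    by_contra hcon
    push_neg at hcon
    nlinarith [mul_nonneg hl0.le (sub_nonneg.2 huz),
      mul_pos (sub_pos.2 hl1) (sub_pos.2 hcon), htf, hcc2]

/-- in a partially collaborative equilibrium, the non-linking
large contributor provides her isolation bundle, while the other specializes in
`y`, topping up to her isolation demand; in particular `ŷ_j ≥ ŷ_i`. -/
theorem statement14 {n : ℕ} (hn : 3 ≤ n)
    (t : Fin n → ℝ) (hT : TypeAssumptions t)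
    (f : ℝ → ℝ) (c k : ℝ) (hc : 0 < c) (hk : 0 < k)
    (hB : BenefitAssumptions f c)
    (x y : Fin n → ℝ) (g : Fin n → Fin n → Bool)
    (hNE : NashEq t f c k x y g)
    (i j : Fin n) (hij : i ≠ j)
    (hi : isContributor g i) (hj : isContributor g j)
    (hall : ∀ l, isContributor g l → l = i ∨ l = j)
    (horder : t j < t i)
    (hgji : g j i = true) (hgij : g i j = false)
    (xhi yhi xhj yhj : ℝ)
    (hdi : IsIsolationDemand f c (t i) xhi yhi)
    (hdj : IsIsolationDemand f c (t j) xhj yhj) :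
    x i = xhi ∧ y i = yhi ∧ x j = 0 ∧ y j = yhj - yhi ∧ yhi ≤ yhj := by
  obtain ⟨hx0, hy0, hself, hdev⟩ := hNE
  have hmono := hB.2.1
  have hsc := hB.2.2.1
  have hconc : ConcaveOn ℝ (Set.Ici 0) f := hsc.concaveOn
  obtain ⟨hti0, hti1⟩ := hT.2.1 i
  obtain ⟨htj0, htj1⟩ := hT.2.1 j
  obtain ⟨hxi0, hyi0, hmi⟩ := hdi
  obtain ⟨hxj0, hyj0, hmj⟩ := hdj
  -- the link structure
  have hgi : ∀ l, g i l = false := by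
    intro l
    by_contra h
    have h' : g i l = true := by simpa using h
    rcases hall l ⟨i, h'⟩ with h1 | h1 <;> rw [h1] at h'
    · rw [hself i] at h'; exact absurd h' (by simp)
    · rw [hgij] at h'; exact absurd h' (by simp)
  have hgj : ∀ l, l ≠ i → g j l = false := by
    intro l hl
    by_contra h
    have h' : g j l = true := by simpa using h
    rcases hall l ⟨j, h'⟩ with h1 | h1
    · exact hl h1
    · rw [h1, hself j] at h'; exact absurd h' (by simp)
  -- spill computations
  have spill_i : ∀ w : Fin n → ℝ, spill w g i = 0 := by
    intro w; unfold spill; simp [hgi]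
  have spill_j : ∀ w : Fin n → ℝ, spill w g j = w i := by
    intro w; unfold spill
    rw [Finset.sum_eq_single_of_mem i (Finset.mem_univ i)]
    · rw [hgji]; simp
    · intro l _ hl; rw [hgj l hl]; simp
  -- spill is unchanged when a player updates her own contributions
  have spill_upd : ∀ (w : Fin n → ℝ) (p : Fin n) (w' : ℝ),
      spill (Function.update w p w') g p = spill w g p := by
    intro w p w'
    unfold spill
    refine Finset.sum_congr rfl fun l _ => ?_
    by_cases hl : l = p
    · simp [hl, hself p]
    · rw [Function.update_of_ne hl]
  -- keeping one's own links, deviations in contributions are unprofitable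
  have dev : ∀ (p : Fin n) (x' y' : ℝ), 0 ≤ x' → 0 ≤ y' →
      t p * f (x' + spill x g p) + (1 - t p) * f (y' + spill y g p) - c * (x' + y')
        ≤ t p * f (x p + spill x g p) + (1 - t p) * f (y p + spill y g p)
          - c * (x p + y p) := by
    intro p x' y' hx' hy'
    have hupd : updLinks g p (g p) = g := by
      funext a b; unfold updLinks; by_cases h : a = p <;> simp [h]
    have h := hdev p x' y' (g p) hx' hy' (hself p)
    rw [hupd] at h
    unfold payoff at h
    rw [spill_upd x p x', spill_upd y p y', Function.update_self, Function.update_self] at h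
    linarith
  -- comparative statics: xhj ≤ xhi and yhi ≤ yhj
  have hfx : f xhj ≤ f xhi := by
    have A := hmi xhj yhi hxj0 hyi0
    have B := hmj xhi yhj hxi0 hyj0
    by_contra h
    push_neg at h
    nlinarith [mul_pos (sub_pos.2 horder) (sub_pos.2 h)]
  have hxx : xhj ≤ xhi := by
    by_contra h
    push_neg at h
    exact absurd (hmono (Set.mem_Ici.2 hxi0) (Set.mem_Ici.2 hxj0) h) (not_lt.2 hfx)
  have hfy : f yhi ≤ f yhj := by
    have A := hmi xhi yhj hxi0 hyj0
    have B := hmj xhj yhi hxj0 hyi0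
    by_contra h
    push_neg at h
    nlinarith [mul_pos (sub_pos.2 horder) (sub_pos.2 h)]
  have hyy : yhi ≤ yhj := by
    by_contra h
    push_neg at h
    exact absurd (hmono (Set.mem_Ici.2 hyj0) (Set.mem_Ici.2 hyi0) h) (not_lt.2 hfy)
  -- player i plays her isolation demand
  have devi : ∀ x' y', 0 ≤ x' → 0 ≤ y' →
      t i * f x' + (1 - t i) * f y' - c * (x' + y')
        ≤ t i * f (x i) + (1 - t i) * f (y i) - c * (x i + y i) := by
    intro x' y' hx' hy'
    have h := dev i x' y' hx' hy'
    rw [spill_i x, spill_i y, add_zero, add_zero, add_zero, add_zero] at h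
    exact h
  have hxi_eq : x i = xhi := by
    refine uniq1 hsc hti0 hc le_rfl (hx0 i) hxi0 ?_ ?_
    · intro w hw
      have := devi w (y i) hw (hy0 i)
      simp only [add_zero]
      linarith
    · intro w hw
      have := hmi w yhi hw hyi0
      simp only [add_zero]
      linarith
  have hyi_eq : y i = yhi := by
    refine uniq1 hsc (by linarith : (0:ℝ) ≤ 1 - t i) hc le_rfl (hy0 i) hyi0 ?_ ?_
    · intro w hw
      have := devi (x i) w (hx0 i) hw
      simp only [add_zero]
      linarith
    · intro w hw
      have := hmi xhi w hxi0 hw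
      simp only [add_zero]
      linarith
  -- player j's maximization problem, with spillovers (xhi, yhi)
  have devj : ∀ x' y', 0 ≤ x' → 0 ≤ y' →
      t j * f (x' + xhi) + (1 - t j) * f (y' + yhi) - c * (x' + y')
        ≤ t j * f (x j + xhi) + (1 - t j) * f (y j + yhi) - c * (x j + y j) := by
    intro x' y' hx' hy'
    have h := dev j x' y' hx' hy'
    rw [spill_j x, spill_j y, hxi_eq, hyi_eq] at h
    exact h
  -- marginal optimality of the isolation demand of j
  have umax : ∀ w, 0 ≤ w → t j * f w - c * w ≤ t j * f xhj - c * xhj := by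
    intro w hw
    have := hmj w yhj hw hyj0
    linarith
  have vmax : ∀ w, 0 ≤ w → (1 - t j) * f w - c * w ≤ (1 - t j) * f yhj - c * yhj := by
    intro w hw
    have := hmj xhj w hxj0 hw
    linarith
  set cj : ℝ := yhj - yhi with hcj
  have hcj0 : 0 ≤ cj := by simp [hcj]; linarith
  have hcjy : cj + yhi = yhj := by ring
  -- (0, cj) attains at least the equilibrium value of j
  have hshift : t j * f (x j + xhi) - c * (x j + xhi) ≤ t j * f xhi - c * xhi :=
    concave_shift hconc htj0 hxj0 umax hxx (by linarith [hx0 j])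
  have hvpart : (1 - t j) * f (y j + yhi) - c * (y j + yhi)
      ≤ (1 - t j) * f yhj - c * yhj :=
    vmax (y j + yhi) (by linarith [hy0 j])
  have hge : t j * f (x j + xhi) + (1 - t j) * f (y j + yhi) - c * (x j + y j)
      ≤ t j * f (0 + xhi) + (1 - t j) * f (cj + yhi) - c * (0 + cj) := by
    rw [zero_add, hcjy, hcj]
    linarith
  have hle := devj 0 cj le_rfl hcj0
  have heq : t j * f (x j + xhi) + (1 - t j) * f (y j + yhi) - c * (x j + y j)
      = t j * f (0 + xhi) + (1 - t j) * f (cj + yhi) - c * (0 + cj) :=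
    le_antisymm hge (by linarith)
  -- uniqueness pins down (x j, y j) = (0, cj)
  have hxj_eq : x j = 0 := by
    refine uniq1 hsc htj0 hc hxi0 (hx0 j) le_rfl ?_ ?_
    · intro w hw
      have := devj w (y j) hw (hy0 j)
      linarith
    · intro w hw
      have := devj w cj hw hcj0
      rw [heq] at this
      linarith
  have hyj_eq : y j = cj := by
    refine uniq1 hsc (by linarith : (0:ℝ) ≤ 1 - t j) hc hyi0 (hy0 j) hcj0 ?_ ?_
    · intro w hw
      have := devj (x j) w (hx0 j) hw
      linarith
    · intro w hw
      have := devj 0 w le_rfl hw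
      rw [heq] at this
      linarith
  exact ⟨hxi_eq, hyi_eq, hxj_eq, hyj_eq, hyy⟩
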